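/- Let A be a natural number and B = ∑ j in range n, b j * 10^j with digits b j. Define c 0 = 0, and for each k, S k = A * b k + c k, r k = S k mod 10, c (k+1) = S k / 10. Then A * B = (∑ i in range n, r i * 10^i) + 10^n * c n. -/

import Mathlib

theorem stmt3 (A B n : ℕ) (b c r : ℕ → ℕ)
    (hn : 1 ≤ n)
    (hb : ∀ j < n, b j < 10)
    (hB : B = ∑ j ∈ Finset.range n, b j * 10 ^ j)
    (hc0 : c 0 = 0)
    (hr : ∀ k, r k = (A * b k + c k) % 10)
    (hc : ∀ k, c (k + 1) = (A * b k + c k) / 10) :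
    A * B = (∑ i ∈ Finset.range n, r i * 10 ^ i) + 10 ^ n * c n := by
  subst hB
  clear hn hb
  induction n with
  | zero => simp [hc0]
  | succ k ih =>
    rw [Finset.sum_range_succ, Finset.sum_range_succ, Nat.mul_add, ih]
    have h := Nat.div_add_mod (A * b k + c k) 10
    rw [hr k, hc k]
    have key : (A * b k + c k) % 10 * 10 ^ k + 10 ^ (k + 1) * ((A * b k + c k) / 10)
        = (A * b k + c k) * 10 ^ k := by
      conv_rhs => rw [← h]
      ring
    have key2 : 10 ^ k * c k + A * (b k * 10 ^ k) = (A * b k + c k) * 10 ^ k := by ring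
    rw [add_assoc, add_assoc, key2, key]
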